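/- Let X and Y be locally compact Hausdorff spaces, let E be a real Banach space, let F be a strictly convex real Banach space, and let T : C₀(X,E) → C₀(Y,F) be a linear isometry. Let x ∈ X, let μ ∈ E* be a unit functional with S_{x,μ} = {f ∈ C₀(X,E) : μ(f(x)) = ‖f‖ = 1} nonempty, and let y ∈ Y be such that there exists a unit ν ∈ F* with ν((Tf)(y)) = 1 for all f ∈ S_{x,μ}. Then for every f ∈ C₀(X,E) with f(x) = 0, one has (Tf)(y) = 0. -/

import Mathlib

open ZeroAtInfty

section Aux

variable {X E : Type*} [TopologicalSpace X] [NormedAddCommGroup E] [NormedSpace ℝ E]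

/-- Multiplication of a `C₀` function by a bounded (by 1) continuous scalar function. -/
noncomputable def bsmulC0 (v : X → ℝ) (hc : Continuous v) (hv : ∀ z, |v z| ≤ 1)
    (g : C₀(X, E)) : C₀(X, E) where
  toFun := fun z => v z • g z
  continuous_toFun := hc.smul (map_continuous g)
  zero_at_infty' := by
    refine squeeze_zero_norm (fun z => ?_)
      (tendsto_zero_iff_norm_tendsto_zero.mp g.zero_at_infty')
    rw [norm_smul, Real.norm_eq_abs]
    exact mul_le_of_le_one_left (norm_nonneg _) (hv z)

@[simp] lemma bsmulC0_apply (v : X → ℝ) (hc : Continuous v) (hv : ∀ z, |v z| ≤ 1)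
    (g : C₀(X, E)) (z : X) : bsmulC0 v hc hv g z = v z • g z := rfl

lemma c0_norm_le {f : C₀(X, E)} {C : ℝ} (hC : 0 ≤ C) (h : ∀ z, ‖f z‖ ≤ C) : ‖f‖ ≤ C := by
  rw [← ZeroAtInftyContinuousMap.norm_toBCF_eq_norm]
  exact (BoundedContinuousFunction.norm_le hC).mpr h

lemma c0_eval_norm_le (f : C₀(X, E)) (z : X) : ‖f z‖ ≤ ‖f‖ := by
  rw [← ZeroAtInftyContinuousMap.norm_toBCF_eq_norm]
  exact f.toBCF.norm_coe_le_norm z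

end Aux

set_option maxHeartbeats 1000000 in
/-- Kernel inclusion: if `F` is strictly convex, `T : C₀(X, E) → C₀(Y, F)` is a linear
isometry, `μ ∈ E*` is a unit functional with `S_{x,μ}` nonempty, and `y ∈ Q_{x,μ}`
(witnessed by the unit functional `ν ∈ F*`), then `f x = 0` implies `(T f) y = 0`. -/
theorem ker_evaluation_subset {X Y E F : Type*}
    [TopologicalSpace X] [LocallyCompactSpace X] [T2Space X]
    [TopologicalSpace Y] [LocallyCompactSpace Y] [T2Space Y]
    [NormedAddCommGroup E] [NormedSpace ℝ E] [CompleteSpace E]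
    [NormedAddCommGroup F] [NormedSpace ℝ F] [CompleteSpace F]
    (hF : ∀ x y : F, x ≠ y → ‖x‖ = 1 → ‖y‖ = 1 → ‖x + y‖ < 2)
    (T : C₀(X, E) →ₗᵢ[ℝ] C₀(Y, F))
    (x : X) (μ : StrongDual ℝ E) (hμ : ‖μ‖ = 1)
    (hS : ∃ f : C₀(X, E), μ (f x) = 1 ∧ ‖f‖ = 1)
    (y : Y) (ν : StrongDual ℝ F) (hν : ‖ν‖ = 1)
    (hQ : ∀ f : C₀(X, E), μ (f x) = 1 → ‖f‖ = 1 → ν (T f y) = 1) :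
    ∀ f : C₀(X, E), f x = 0 → T f y = 0 := by
  intro f hfx
  obtain ⟨g, hg1, hg2⟩ := hS
  rw [← norm_eq_zero]
  have key : ∀ ε : ℝ, 0 < ε → ‖T f y‖ ≤ ε := by
    intro ε hε
    -- the open set where `f` is small
    set U : Set X := {z | ‖f z‖ < ε} with hU
    have hUopen : IsOpen U := isOpen_lt (continuous_norm.comp (map_continuous f)) continuous_const
    have hxU : x ∈ U := by simp [hU, hfx, hε]
    -- Urysohn function
    obtain ⟨u, hu1, hu0, -, huIcc⟩ := exists_continuous_one_zero_of_isCompact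
      (isCompact_singleton (x := x)) hUopen.isClosed_compl
      (Set.disjoint_left.mpr (fun z hz hz' => hz' (by simpa using hz ▸ hxU)))
    have hux : u x = 1 := hu1 rfl
    have huabs : ∀ z, |u z| ≤ 1 := fun z => abs_le.mpr ⟨by linarith [(huIcc z).1], (huIcc z).2⟩
    have hu'abs : ∀ z, |1 - u z| ≤ 1 :=
      fun z => abs_le.mpr ⟨by linarith [(huIcc z).2], by linarith [(huIcc z).1]⟩
    set h : C₀(X, E) := bsmulC0 u (map_continuous u) huabs g with hh
    set f1 : C₀(X, E) := bsmulC0 u (map_continuous u) huabs f with hf1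
    set f2 : C₀(X, E) := bsmulC0 (fun z => 1 - u z)
      (continuous_const.sub (map_continuous u)) hu'abs f with hf2
    have hf12 : f1 + f2 = f := by
      ext z
      simp only [ZeroAtInftyContinuousMap.add_apply, hf1, hf2, bsmulC0_apply]
      rw [← add_smul]
      simp
    set s : ℝ := (‖f‖ + 1)⁻¹ with hs
    have hspos : 0 < s := inv_pos.mpr (by positivity)
    have hsf : s * ‖f‖ ≤ 1 := by
      rw [hs, inv_mul_le_iff₀ (by positivity)]
      linarith
    -- membership in S of h + t • f₂ for |t| ≤ s
    have hmem : ∀ t : ℝ, |t| ≤ s → μ ((h + t • f2) x) = 1 ∧ ‖h + t • f2‖ = 1 := by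
      intro t ht
      have hμx : μ ((h + t • f2) x) = 1 := by
        simp [hh, hf2, hux, hfx, hg1]
      refine ⟨hμx, le_antisymm ?_ ?_⟩
      · refine c0_norm_le zero_le_one (fun z => ?_)
        have h1 : ‖(h + t • f2) z‖ ≤ u z * ‖g z‖ + |t| * ((1 - u z) * ‖f z‖) := by
          simp only [ZeroAtInftyContinuousMap.add_apply,
            ZeroAtInftyContinuousMap.smul_apply, hh, hf2, bsmulC0_apply]
          refine (norm_add_le _ _).trans ?_
          rw [norm_smul, norm_smul, norm_smul, Real.norm_eq_abs, Real.norm_eq_abs,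
            Real.norm_eq_abs, abs_of_nonneg (huIcc z).1,
            abs_of_nonneg (by linarith [(huIcc z).2] : (0:ℝ) ≤ 1 - u z)]
        have hgz : ‖g z‖ ≤ 1 := by rw [← hg2]; exact c0_eval_norm_le g z
        have hA : u z * ‖g z‖ ≤ u z := mul_le_of_le_one_right (huIcc z).1 hgz
        have hB : |t| * ((1 - u z) * ‖f z‖) ≤ 1 - u z := by
          have hfz : ‖f z‖ ≤ ‖f‖ := c0_eval_norm_le f z
          have huz : (0:ℝ) ≤ 1 - u z := by linarith [(huIcc z).2]
          have h3 : |t| * ((1 - u z) * ‖f z‖) ≤ s * ((1 - u z) * ‖f z‖) :=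
            mul_le_mul_of_nonneg_right ht (mul_nonneg huz (norm_nonneg _))
          have h5 : s * ‖f z‖ ≤ s * ‖f‖ := mul_le_mul_of_nonneg_left hfz hspos.le
          have h6 : (1 - u z) * (s * ‖f z‖) ≤ (1 - u z) * 1 :=
            mul_le_mul_of_nonneg_left (h5.trans hsf) huz
          nlinarith
        linarith
      · have h2 := μ.le_opNorm ((h + t • f2) x)
        rw [hμx, hμ, one_mul, norm_one] at h2
        exact h2.trans (c0_eval_norm_le _ x)
    -- the three elements of S and their images
    have hhmem := hmem 0 (by simpa using hspos.le)
    simp only [zero_smul, add_zero] at hhmem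
    have hpmem := hmem s (by rw [abs_of_pos hspos])
    have hmmem := hmem (-s) (by rw [abs_neg, abs_of_pos hspos])
    have hνh : ν (T h y) = 1 := hQ h hhmem.1 hhmem.2
    have hνp : ν (T (h + s • f2) y) = 1 := hQ _ hpmem.1 hpmem.2
    have hνm : ν (T (h + (-s) • f2) y) = 1 := hQ _ hmmem.1 hmmem.2
    -- norms of the images at y
    have normTy : ∀ (k : C₀(X, E)), ‖k‖ = 1 → ν (T k y) = 1 → ‖T k y‖ = 1 := by
      intro k hk hνk
      refine le_antisymm ?_ ?_
      · calc ‖T k y‖ ≤ ‖T k‖ := c0_eval_norm_le _ y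
          _ = ‖k‖ := T.norm_map k
          _ = 1 := hk
      · calc (1:ℝ) = ν (T k y) := hνk.symm
          _ ≤ ‖ν (T k y)‖ := le_abs_self _
          _ ≤ ‖ν‖ * ‖T k y‖ := ν.le_opNorm _
          _ = ‖T k y‖ := by rw [hν, one_mul]
    have hnp : ‖T (h + s • f2) y‖ = 1 := normTy _ hpmem.2 hνp
    have hnm : ‖T (h + (-s) • f2) y‖ = 1 := normTy _ hmmem.2 hνm
    have hnh : ‖T h y‖ = 1 := normTy _ hhmem.2 hνh
    -- strict convexity forces the two perturbations to coincide
    set vp : F := T (h + s • f2) y with hvp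
    set vm : F := T (h + (-s) • f2) y with hvm
    have hsum : vp + vm = (2 : ℝ) • (T h y) := by
      rw [hvp, hvm, T.map_add, T.map_add, T.map_smul, T.map_smul]
      simp only [ZeroAtInftyContinuousMap.add_apply, ZeroAtInftyContinuousMap.smul_apply]
      module
    have heq : vp = vm := by
      by_contra hne
      have := hF vp vm hne hnp hnm
      rw [hsum] at this
      rw [norm_smul, Real.norm_ofNat, hnh] at this
      linarith
    have hTf2 : T f2 y = 0 := by
      have : (2 * s) • (T f2 y) = 0 := by
        have : vp - vm = (2 * s) • (T f2 y) := by
          rw [hvp, hvm, T.map_add, T.map_add, T.map_smul, T.map_smul]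
          simp only [ZeroAtInftyContinuousMap.add_apply, ZeroAtInftyContinuousMap.smul_apply]
          module
        rw [← this, heq, sub_self]
      have h2s : (2 * s) ≠ 0 := by positivity
      exact (smul_eq_zero.mp this).resolve_left h2s
    -- conclude
    have hTf : T f y = T f1 y := by
      rw [← hf12, T.map_add]
      simp [hTf2]
    rw [hTf]
    calc ‖T f1 y‖ ≤ ‖T f1‖ := c0_eval_norm_le _ y
      _ = ‖f1‖ := T.norm_map f1
      _ ≤ ε := by
        refine c0_norm_le hε.le (fun z => ?_)
        simp only [hf1, bsmulC0_apply]
        rw [norm_smul, Real.norm_eq_abs, abs_of_nonneg (huIcc z).1]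
        by_cases hzU : z ∈ U
        · have hfz : ‖f z‖ ≤ ε := le_of_lt hzU
          have := mul_le_of_le_one_left (le_trans (norm_nonneg (f z)) hfz) (huIcc z).2
          calc u z * ‖f z‖ ≤ u z * ε :=
                mul_le_mul_of_nonneg_left hfz (huIcc z).1
            _ ≤ 1 * ε := mul_le_mul_of_nonneg_right (huIcc z).2 hε.le
            _ = ε := one_mul ε
        · rw [hu0 hzU]
          rw [Pi.zero_apply, zero_mul]
          exact hε.le
  have h0 : ‖T f y‖ ≤ 0 := le_of_forall_pos_le_add fun ε hε => by simpa using key ε hε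
  exact le_antisymm h0 (norm_nonneg _)
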